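/- In the setting of the previous statement, if c is not (a.e.) constant on 𝕋ⁿ, then ⟨cN₁⟩ < 0 strictly; and if c is constant then N₁ = 0 and ⟨cN₁⟩ = 0. -/

import Mathlib

open MeasureTheory Convolution

lemma per_reduce {n : ℕ} {f : (Fin n → ℝ) → ℝ}
    (hf : ∀ (x : Fin n → ℝ) (k : Fin n → ℤ), f (x + fun i => (k i : ℝ)) = f x)
    (x : Fin n → ℝ) : ∃ y ∈ Set.Icc (0 : Fin n → ℝ) 1, f x = f y := by
  refine ⟨fun i => Int.fract (x i), ⟨fun i => Int.fract_nonneg _, fun i => (Int.fract_lt_one _).le⟩, ?_⟩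
  have h2 := hf (fun i => Int.fract (x i)) (fun i => ⌊x i⌋)
  rw [← h2]; congr 1; funext i
  exact (Int.fract_add_floor (x i)).symm

lemma cube_nbhd_pos {n : ℕ} {U : Set (Fin n → ℝ)} (hU : IsOpen U) {x₀ : Fin n → ℝ}
    (hx₀ : x₀ ∈ Set.Icc (0 : Fin n → ℝ) 1) (hx₀U : x₀ ∈ U) :
    0 < volume (U ∩ Set.Icc (0 : Fin n → ℝ) 1) := by
  set O : Set (Fin n → ℝ) := Set.pi Set.univ (fun _ => Set.Ioo (0:ℝ) 1) with hO
  have hOopen : IsOpen O := isOpen_set_pi Set.finite_univ (fun _ _ => isOpen_Ioo)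
  have hclos : closure O = Set.Icc (0 : Fin n → ℝ) 1 := by
    rw [hO, closure_pi_set]
    simp only [closure_Ioo (zero_ne_one' ℝ)]
    exact Set.pi_univ_Icc _ _
  have hx₀c : x₀ ∈ closure O := hclos ▸ hx₀
  have hne : (U ∩ O).Nonempty := by
    rcases mem_closure_iff.1 hx₀c U hU hx₀U with ⟨z, hz⟩
    exact ⟨z, hz⟩
  have hpos : 0 < volume (U ∩ O) := (hU.inter hOopen).measure_pos volume hne
  refine lt_of_lt_of_le hpos (measure_mono (Set.inter_subset_inter_right _ ?_))
  rw [← hclos]; exact subset_closure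

lemma zero_of_integral_zero {n : ℕ} {h : (Fin n → ℝ) → ℝ} (hcont : Continuous h)
    (hnn : ∀ x, 0 ≤ h x) (hint : ∫ x in Set.Icc (0 : Fin n → ℝ) 1, h x = 0) :
    ∀ x ∈ Set.Icc (0 : Fin n → ℝ) 1, h x = 0 := by
  intro x₀ hx₀
  by_contra hne
  have hpos : 0 < h x₀ := lt_of_le_of_ne (hnn x₀) (Ne.symm hne)
  set U : Set (Fin n → ℝ) := {y | h x₀ / 2 < h y} with hUdef
  have hUopen : IsOpen U := isOpen_lt continuous_const hcont
  have hx₀U : x₀ ∈ U := by simp [hUdef]; linarith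
  set s := U ∩ Set.Icc (0 : Fin n → ℝ) 1 with hs
  have hmeasU : 0 < volume s := cube_nbhd_pos hUopen hx₀ hx₀U
  have hsub : s ⊆ Set.Icc (0 : Fin n → ℝ) 1 := Set.inter_subset_right
  have hsm : MeasurableSet s := hUopen.measurableSet.inter measurableSet_Icc
  have hcube_int : IntegrableOn h (Set.Icc (0 : Fin n → ℝ) 1) volume :=
    hcont.continuousOn.integrableOn_compact isCompact_Icc
  have hsint : IntegrableOn h s volume := hcube_int.mono_set hsub
  have hfin : volume s ≠ ⊤ := by
    refine ne_of_lt (lt_of_le_of_lt (measure_mono hsub) ?_)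
    rw [Real.volume_Icc_pi]
    exact (lt_of_le_of_lt (Finset.prod_le_one (fun _ _ => zero_le) (fun _ _ => by norm_num)) ENNReal.one_lt_top)
  have h1 : h x₀ / 2 * (volume s).toReal ≤ ∫ x in s, h x :=
    setIntegral_ge_of_const_le_real hsm hfin (fun x hx => le_of_lt hx.1) hsint
  have h2 : ∫ x in s, h x ≤ ∫ x in Set.Icc (0 : Fin n → ℝ) 1, h x :=
    setIntegral_mono_set hcube_int (Filter.Eventually.of_forall (fun x => hnn x)) (HasSubset.Subset.eventuallyLE hsub)
  have h3 : 0 < (volume s).toReal := ENNReal.toReal_pos (ne_of_gt hmeasU) hfin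
  nlinarith [hint]

lemma dense_test {n : ℕ} {g : (Fin n → ℝ) → ℝ} (hg : Continuous g)
    (hper : ∀ (x : Fin n → ℝ) (k : Fin n → ℤ), g (x + fun i => (k i : ℝ)) = g x)
    (h0 : ∀ φ : (Fin n → ℝ) → ℝ, ContDiff ℝ 1 φ →
      (∀ (x : Fin n → ℝ) (k : Fin n → ℤ), φ (x + fun i => (k i : ℝ)) = φ x) →
      ∫ x in Set.Icc (0 : Fin n → ℝ) 1, g x * φ x = 0) :
    ∀ x, g x = 0 := by
  -- global bound on |g|
  obtain ⟨y₀, hy₀, hy₀max⟩ := isCompact_Icc.exists_isMaxOn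
    (Set.nonempty_Icc.2 (zero_le_one)) (continuous_abs.comp hg).continuousOn
  set M : ℝ := |g y₀| + 1 with hM
  have hMpos : 0 < M := by positivity
  have hgM : ∀ x, |g x| ≤ M := by
    intro x
    obtain ⟨y, hy, hxy⟩ := per_reduce hper x
    rw [hxy]
    calc |g y| ≤ |g y₀| := hy₀max hy
    _ ≤ M := by simp [hM]
  -- cube is in the ball of radius 3
  have hcube_norm : ∀ x ∈ Set.Icc (0 : Fin n → ℝ) 1, ‖x‖ ≤ 1 := by
    intro x hx
    refine pi_norm_le_iff_of_nonneg zero_le_one |>.2 (fun i => ?_)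
    rw [Real.norm_eq_abs, abs_le]
    have h0 : (0:ℝ) ≤ x i := hx.1 i
    have h1 : x i ≤ (1:ℝ) := hx.2 i
    constructor <;> linarith
  set B : Set (Fin n → ℝ) := Metric.closedBall 0 3 with hB
  have hgucB : UniformContinuousOn g B :=
    (isCompact_closedBall _ _).uniformContinuousOn_of_continuous hg.continuousOn
  -- main estimate : for every d > 0, ∫ g² ≤ M * d
  have key : ∀ d : ℝ, 0 < d → (∫ x in Set.Icc (0 : Fin n → ℝ) 1, g x * g x) ≤ M * d := by
    intro d hd
    obtain ⟨δ₀, hδ₀, hδ⟩ := Metric.uniformContinuousOn_iff.1 hgucB d hd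
    set δ : ℝ := min δ₀ 1 with hδdef
    have hδpos : 0 < δ := lt_min hδ₀ one_pos
    have hδ1 : δ ≤ 1 := min_le_right _ _
    set b : ContDiffBump (0 : Fin n → ℝ) := ⟨δ/2, δ, by positivity, by linarith⟩ with hbdef
    set ρ : (Fin n → ℝ) → ℝ := b.normed volume with hρ
    set φ : (Fin n → ℝ) → ℝ := ρ ⋆[ContinuousLinearMap.lsmul ℝ ℝ, volume] g with hφdef
    have hφ1 : ContDiff ℝ 1 φ :=
      b.hasCompactSupport_normed.contDiff_convolution_left _ b.contDiff_normed hg.locallyIntegrable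
    have hφc : Continuous φ := hφ1.continuous
    have hφper : ∀ (x : Fin n → ℝ) (k : Fin n → ℤ), φ (x + fun i => (k i : ℝ)) = φ x := by
      intro x k
      rw [hφdef]
      simp only [convolution_def]
      congr 1; funext t
      have : x + (fun i => (k i : ℝ)) - t = (x - t) + fun i => (k i : ℝ) := by abel
      rw [this, hper]
    have hzero : ∫ x in Set.Icc (0 : Fin n → ℝ) 1, g x * φ x = 0 := h0 φ hφ1 hφper
    -- pointwise closeness on the cube
    have hclose : ∀ x ∈ Set.Icc (0 : Fin n → ℝ) 1, |g x - φ x| ≤ d := by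
      intro x hx
      have hint1 : Integrable (fun t => ρ t • g x) volume := b.integrable_normed.smul_const _
      have hint2 : Integrable (fun t => ρ t • g (x - t)) volume := by
        apply Continuous.integrable_of_hasCompactSupport
        · exact b.continuous_normed.smul (hg.comp (continuous_const.sub continuous_id))
        · apply HasCompactSupport.intro (isCompact_closedBall (0 : Fin n → ℝ) δ)
          intro t ht
          have : ρ t = 0 := by
            by_contra hne
            have := b.support_normed_eq (μ := volume) ▸ Function.mem_support.2 hne
            exact ht (Metric.ball_subset_closedBall this)
          simp [this]
      have hgx : g x = ∫ t, ρ t • g x := by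
        rw [integral_smul_const, b.integral_normed, one_smul]
      have hφx : φ x = ∫ t, ρ t • g (x - t) := by
        rw [hφdef]; simp only [convolution_def]; rfl
      rw [hgx, hφx, ← integral_sub hint1 hint2]
      have hbound : ∀ t, ‖ρ t • g x - ρ t • g (x - t)‖ ≤ ρ t * d := by
        intro t
        rw [← smul_sub]
        by_cases hρt : ρ t = 0
        · simp [hρt]
        · have htsupp : t ∈ Metric.ball (0 : Fin n → ℝ) δ :=
            b.support_normed_eq (μ := volume) ▸ Function.mem_support.2 hρt
          have htn : ‖t‖ < δ := by simpa using htsupp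
          have hxB : x ∈ B := by
            rw [hB, Metric.mem_closedBall, dist_zero_right]
            linarith [hcube_norm x hx]
          have hxtB : x - t ∈ B := by
            rw [hB, Metric.mem_closedBall, dist_zero_right]
            calc ‖x - t‖ ≤ ‖x‖ + ‖t‖ := norm_sub_le _ _
            _ ≤ 3 := by linarith [hcube_norm x hx]
          have hdist : dist x (x - t) < δ₀ := by
            rw [dist_eq_norm]
            simpa using lt_of_lt_of_le htn (min_le_left _ _)
          have := hδ x hxB (x - t) hxtB hdist
          rw [Real.dist_eq] at this
          rw [norm_smul, Real.norm_eq_abs, Real.norm_eq_abs,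
            abs_of_nonneg (b.nonneg_normed t)]
          exact mul_le_mul_of_nonneg_left this.le (b.nonneg_normed t)
      calc |∫ t, (ρ t • g x - ρ t • g (x - t))| ≤ ∫ t, ρ t * d :=
            norm_integral_le_of_norm_le (b.integrable_normed.mul_const d)
              (Filter.Eventually.of_forall hbound)
      _ = d := by rw [integral_mul_const, b.integral_normed, one_mul]
    -- assemble
    have hcube_int_g2 : IntegrableOn (fun x => g x * g x) (Set.Icc (0 : Fin n → ℝ) 1) volume :=
      (hg.mul hg).continuousOn.integrableOn_compact isCompact_Icc
    have hcube_int_gφ : IntegrableOn (fun x => g x * φ x) (Set.Icc (0 : Fin n → ℝ) 1) volume :=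
      (hg.mul hφc).continuousOn.integrableOn_compact isCompact_Icc
    have hsplit : (∫ x in Set.Icc (0 : Fin n → ℝ) 1, g x * g x)
        = ∫ x in Set.Icc (0 : Fin n → ℝ) 1, g x * (g x - φ x) := by
      rw [show (fun x => g x * (g x - φ x)) = fun x => g x * g x - g x * φ x by funext x; ring,
        integral_sub hcube_int_g2 hcube_int_gφ, hzero, sub_zero]
    rw [hsplit]
    have hmono : ∫ x in Set.Icc (0 : Fin n → ℝ) 1, g x * (g x - φ x)
        ≤ ∫ _x in Set.Icc (0 : Fin n → ℝ) 1, M * d := by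
      apply setIntegral_mono_on
      · exact (hg.mul (hg.sub hφc)).continuousOn.integrableOn_compact isCompact_Icc
      · exact integrableOn_const (ne_of_lt (by rw [Real.volume_Icc_pi]; exact
          (lt_of_le_of_lt (Finset.prod_le_one (fun _ _ => zero_le) (fun _ _ => by norm_num)) ENNReal.one_lt_top)))
      · exact measurableSet_Icc
      · intro x hx
        calc g x * (g x - φ x) ≤ |g x * (g x - φ x)| := le_abs_self _
        _ = |g x| * |g x - φ x| := abs_mul _ _
        _ ≤ M * d := mul_le_mul (hgM x) (hclose x hx) (abs_nonneg _) hMpos.le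
    refine le_trans hmono ?_
    rw [setIntegral_const, smul_eq_mul, measureReal_def, Real.volume_Icc_pi_toReal zero_le_one]
    simp
  -- conclude ∫ g² = 0
  have hg2nn : ∀ x, 0 ≤ g x * g x := fun x => mul_self_nonneg _
  have hg2int : (∫ x in Set.Icc (0 : Fin n → ℝ) 1, g x * g x) = 0 := by
    have hle : (∫ x in Set.Icc (0 : Fin n → ℝ) 1, g x * g x) ≤ 0 := by
      by_contra hlt
      push_neg at hlt
      have hk := key ((∫ x in Set.Icc (0 : Fin n → ℝ) 1, g x * g x) / (2 * M)) (by positivity)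
      have he : M * ((∫ x in Set.Icc (0 : Fin n → ℝ) 1, g x * g x) / (2 * M))
          = (∫ x in Set.Icc (0 : Fin n → ℝ) 1, g x * g x) / 2 := by
        field_simp
      rw [he] at hk
      linarith
    have hge : 0 ≤ ∫ x in Set.Icc (0 : Fin n → ℝ) 1, g x * g x :=
      setIntegral_nonneg measurableSet_Icc (fun x _ => hg2nn x)
    linarith
  have hzero_cube := zero_of_integral_zero (hg.mul hg) hg2nn hg2int
  intro x
  obtain ⟨y, hy, hxy⟩ := per_reduce hper x
  have := hzero_cube y hy
  have hgy : g y = 0 := mul_self_eq_zero.1 this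
  rw [hxy, hgy]

lemma fderiv_translate {n : ℕ} {f : (Fin n → ℝ) → ℝ} (hf : Differentiable ℝ f)
    (v x : Fin n → ℝ) : fderiv ℝ (fun y => f (y + v)) x = fderiv ℝ f (x + v) := by
  have h1 : HasFDerivAt (fun y : Fin n → ℝ => y + v)
      (ContinuousLinearMap.id ℝ (Fin n → ℝ)) x := (hasFDerivAt_id x).add_const v
  have h2 := (hf (x + v)).hasFDerivAt.comp x h1
  simpa [Function.comp_def] using h2.fderiv

/-- In the same setting: if `c` is not constant then `⟨cN₁⟩ < 0` strictly; if `c` is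
constant then `N₁ = 0` and `⟨cN₁⟩ = 0`. -/
theorem stmt10 (n : ℕ)
    (a : (Fin n → ℝ) → Matrix (Fin n) (Fin n) ℝ) (c N₁ : (Fin n → ℝ) → ℝ)
    (ha_cont : Continuous a) (hc_cont : Continuous c)
    (ha_per : ∀ (x : Fin n → ℝ) (k : Fin n → ℤ), a (x + fun i => (k i : ℝ)) = a x)
    (hc_per : ∀ (x : Fin n → ℝ) (k : Fin n → ℤ), c (x + fun i => (k i : ℝ)) = c x)
    (hN_per : ∀ (x : Fin n → ℝ) (k : Fin n → ℤ), N₁ (x + fun i => (k i : ℝ)) = N₁ x)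
    (ha_symm : ∀ x, (a x).IsSymm)
    (C₀ : ℝ) (hC₀ : 0 < C₀)
    (ha_coer : ∀ x (ξ : Fin n → ℝ), C₀ * ∑ i, ξ i ^ 2 ≤ ∑ i, ∑ j, a x i j * ξ i * ξ j)
    (hN_diff : ContDiff ℝ 1 N₁)
    (hN_mean : ∫ x in Set.Icc (0 : Fin n → ℝ) 1, N₁ x = 0)
    (hweak : ∀ φ : (Fin n → ℝ) → ℝ, ContDiff ℝ 1 φ →
      (∀ (x : Fin n → ℝ) (k : Fin n → ℤ), φ (x + fun i => (k i : ℝ)) = φ x) →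
      (∫ x in Set.Icc (0 : Fin n → ℝ) 1,
          ∑ i, ∑ j, a x i j * fderiv ℝ N₁ x (Pi.single j 1) * fderiv ℝ φ x (Pi.single i 1))
        = ∫ x in Set.Icc (0 : Fin n → ℝ) 1,
            ((∫ y in Set.Icc (0 : Fin n → ℝ) 1, c y) - c x) * φ x) :
    ((¬ ∃ k : ℝ, ∀ x, c x = k) →
      (∫ x in Set.Icc (0 : Fin n → ℝ) 1, c x * N₁ x) < 0) ∧
    ((∃ k : ℝ, ∀ x, c x = k) →
      (∀ x, N₁ x = 0) ∧ (∫ x in Set.Icc (0 : Fin n → ℝ) 1, c x * N₁ x) = 0) := by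
  have hNc : Continuous N₁ := hN_diff.continuous
  have hdiffN : Differentiable ℝ N₁ := hN_diff.differentiable one_ne_zero
  have hfd : Continuous fun x => fderiv ℝ N₁ x := hN_diff.continuous_fderiv one_ne_zero
  have hDcont : ∀ i : Fin n, Continuous fun x => fderiv ℝ N₁ x (Pi.single i 1) := fun i =>
    ((ContinuousLinearMap.apply ℝ ℝ (Pi.single i 1 : Fin n → ℝ)).continuous).comp hfd
  have hQcont : Continuous fun x =>
      ∑ i, ∑ j, a x i j * fderiv ℝ N₁ x (Pi.single j 1) * fderiv ℝ N₁ x (Pi.single i 1) := by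
    refine continuous_finset_sum _ fun i _ => continuous_finset_sum _ fun j _ => ?_
    exact ((ha_cont.matrix_elem i j).mul (hDcont j)).mul (hDcont i)
  have hintN : IntegrableOn N₁ (Set.Icc (0 : Fin n → ℝ) 1) volume :=
    hNc.continuousOn.integrableOn_compact isCompact_Icc
  have hintcN : IntegrableOn (fun x => c x * N₁ x) (Set.Icc (0 : Fin n → ℝ) 1) volume :=
    (hc_cont.mul hNc).continuousOn.integrableOn_compact isCompact_Icc
  -- energy identity
  have energy : (∫ x in Set.Icc (0 : Fin n → ℝ) 1,
      ∑ i, ∑ j, a x i j * fderiv ℝ N₁ x (Pi.single j 1) * fderiv ℝ N₁ x (Pi.single i 1))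
      = -(∫ x in Set.Icc (0 : Fin n → ℝ) 1, c x * N₁ x) := by
    rw [hweak N₁ hN_diff hN_per]
    simp only [sub_mul]
    rw [integral_sub (hintN.const_mul _) hintcN, integral_const_mul, hN_mean, mul_zero, zero_sub]
  -- coercivity pointwise
  have hQcomp : ∀ x, C₀ * (∑ i, (fderiv ℝ N₁ x (Pi.single i 1)) ^ 2)
      ≤ ∑ i, ∑ j, a x i j * fderiv ℝ N₁ x (Pi.single j 1) * fderiv ℝ N₁ x (Pi.single i 1) := by
    intro x
    refine le_trans (ha_coer x fun i => fderiv ℝ N₁ x (Pi.single i 1)) (le_of_eq ?_)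
    exact Finset.sum_congr rfl fun i _ => Finset.sum_congr rfl fun j _ => by ring
  have hQnn : ∀ x, 0 ≤ ∑ i, ∑ j, a x i j * fderiv ℝ N₁ x (Pi.single j 1)
      * fderiv ℝ N₁ x (Pi.single i 1) := by
    intro x
    refine le_trans ?_ (hQcomp x)
    positivity
  have hIle : (∫ x in Set.Icc (0 : Fin n → ℝ) 1, c x * N₁ x) ≤ 0 := by
    have h0 : 0 ≤ ∫ x in Set.Icc (0 : Fin n → ℝ) 1,
        ∑ i, ∑ j, a x i j * fderiv ℝ N₁ x (Pi.single j 1) * fderiv ℝ N₁ x (Pi.single i 1) :=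
      setIntegral_nonneg measurableSet_Icc fun x _ => hQnn x
    linarith [energy]
  -- fderiv is periodic
  have hfper : ∀ (x : Fin n → ℝ) (k : Fin n → ℤ),
      fderiv ℝ N₁ (x + fun i => (k i : ℝ)) = fderiv ℝ N₁ x := by
    intro x k
    rw [← fderiv_translate hdiffN (fun i => ((k i : ℤ) : ℝ)) x]
    congr 1
    funext y
    exact hN_per y k
  -- key step : zero integral forces N₁ ≡ 0
  have key : (∫ x in Set.Icc (0 : Fin n → ℝ) 1, c x * N₁ x) = 0 →
      (∀ x, fderiv ℝ N₁ x = 0) ∧ (∀ x, N₁ x = 0) := by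
    intro hI0
    have hQzero : (∫ x in Set.Icc (0 : Fin n → ℝ) 1,
        ∑ i, ∑ j, a x i j * fderiv ℝ N₁ x (Pi.single j 1) * fderiv ℝ N₁ x (Pi.single i 1)) = 0 := by
      rw [energy, hI0, neg_zero]
    have hScont : Continuous fun x => ∑ i, (fderiv ℝ N₁ x (Pi.single i 1)) ^ 2 :=
      continuous_finset_sum _ fun i _ => (hDcont i).pow 2
    have hSnn : ∀ x, (0:ℝ) ≤ ∑ i, (fderiv ℝ N₁ x (Pi.single i 1)) ^ 2 := fun x =>
      Finset.sum_nonneg fun i _ => sq_nonneg _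
    have hSint0 : (∫ x in Set.Icc (0 : Fin n → ℝ) 1,
        ∑ i, (fderiv ℝ N₁ x (Pi.single i 1)) ^ 2) = 0 := by
      have hintS : IntegrableOn (fun x => ∑ i, (fderiv ℝ N₁ x (Pi.single i 1)) ^ 2)
          (Set.Icc (0 : Fin n → ℝ) 1) volume :=
        hScont.continuousOn.integrableOn_compact isCompact_Icc
      have hintQ : IntegrableOn (fun x => ∑ i, ∑ j, a x i j * fderiv ℝ N₁ x (Pi.single j 1)
          * fderiv ℝ N₁ x (Pi.single i 1)) (Set.Icc (0 : Fin n → ℝ) 1) volume :=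
        hQcont.continuousOn.integrableOn_compact isCompact_Icc
      have hmono : C₀ * (∫ x in Set.Icc (0 : Fin n → ℝ) 1,
          ∑ i, (fderiv ℝ N₁ x (Pi.single i 1)) ^ 2)
          ≤ ∫ x in Set.Icc (0 : Fin n → ℝ) 1,
            ∑ i, ∑ j, a x i j * fderiv ℝ N₁ x (Pi.single j 1) * fderiv ℝ N₁ x (Pi.single i 1) := by
        rw [← integral_const_mul]
        exact setIntegral_mono_on (hintS.const_mul C₀) hintQ measurableSet_Icc
          fun x _ => hQcomp x
      have hge : 0 ≤ ∫ x in Set.Icc (0 : Fin n → ℝ) 1,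
          ∑ i, (fderiv ℝ N₁ x (Pi.single i 1)) ^ 2 :=
        setIntegral_nonneg measurableSet_Icc fun x _ => hSnn x
      rw [hQzero] at hmono
      nlinarith
    have hScube := zero_of_integral_zero hScont hSnn hSint0
    have hSper : ∀ (x : Fin n → ℝ) (k : Fin n → ℤ),
        (∑ i, (fderiv ℝ N₁ (x + fun i => (k i : ℝ)) (Pi.single i 1)) ^ 2)
        = ∑ i, (fderiv ℝ N₁ x (Pi.single i 1)) ^ 2 := by
      intro x k
      simp only [hfper]
    have hSall : ∀ x, (∑ i, (fderiv ℝ N₁ x (Pi.single i 1)) ^ 2) = 0 := by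
      intro x
      obtain ⟨y, hy, hxy⟩ := per_reduce (f := fun x => ∑ i, (fderiv ℝ N₁ x (Pi.single i 1)) ^ 2) hSper x
      rw [hxy]
      exact hScube y hy
    have hDzero : ∀ (x : Fin n → ℝ) (i : Fin n), fderiv ℝ N₁ x (Pi.single i 1) = 0 := by
      intro x i
      have := (Finset.sum_eq_zero_iff_of_nonneg fun j _ => sq_nonneg
        (fderiv ℝ N₁ x (Pi.single j 1))).1 (hSall x) i (Finset.mem_univ i)
      exact pow_eq_zero_iff two_ne_zero |>.1 this
    have hfz : ∀ x, fderiv ℝ N₁ x = 0 := by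
      intro x
      apply ContinuousLinearMap.ext
      intro v
      have hv : v = ∑ i, v i • (Pi.single i 1 : Fin n → ℝ) := by
        funext j
        rw [Finset.sum_apply]
        simp [Pi.single_apply]
      rw [hv, map_sum]
      simp [hDzero]
    refine ⟨hfz, ?_⟩
    have hconstN : ∀ x, N₁ x = N₁ 0 := fun x => is_const_of_fderiv_eq_zero hdiffN hfz x 0
    have hmean2 : (∫ x in Set.Icc (0 : Fin n → ℝ) 1, N₁ x) = N₁ 0 := by
      rw [setIntegral_congr_fun measurableSet_Icc (fun x _ => hconstN x), setIntegral_const,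
        smul_eq_mul, measureReal_def, Real.volume_Icc_pi_toReal zero_le_one]
      simp
    intro x
    rw [hconstN x, ← hmean2, hN_mean]
  -- if the integral vanishes then c is constant
  have hconstc : (∫ x in Set.Icc (0 : Fin n → ℝ) 1, c x * N₁ x) = 0 → ∃ k, ∀ x, c x = k := by
    intro hI0
    have hfz := (key hI0).1
    have htest : ∀ φ : (Fin n → ℝ) → ℝ, ContDiff ℝ 1 φ →
        (∀ (x : Fin n → ℝ) (k : Fin n → ℤ), φ (x + fun i => (k i : ℝ)) = φ x) →
        ∫ x in Set.Icc (0 : Fin n → ℝ) 1,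
          ((∫ y in Set.Icc (0 : Fin n → ℝ) 1, c y) - c x) * φ x = 0 := by
      intro φ h1 h2
      rw [← hweak φ h1 h2]
      simp [hfz]
    have hgz := dense_test (g := fun x => (∫ y in Set.Icc (0 : Fin n → ℝ) 1, c y) - c x)
      (continuous_const.sub hc_cont) (by intro x k; simp [hc_per]) htest
    refine ⟨∫ y in Set.Icc (0 : Fin n → ℝ) 1, c y, fun x => ?_⟩
    have h : (∫ y in Set.Icc (0 : Fin n → ℝ) 1, c y) - c x = 0 := hgz x
    linarith
  constructor
  · intro hnc
    refine lt_of_le_of_ne hIle fun h => hnc (hconstc h)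
  · rintro ⟨k, hk⟩
    have hI0 : (∫ x in Set.Icc (0 : Fin n → ℝ) 1, c x * N₁ x) = 0 := by
      rw [setIntegral_congr_fun measurableSet_Icc (g := fun x => k * N₁ x) (fun x _ => by rw [hk]),
        integral_const_mul, hN_mean, mul_zero]
    exact ⟨(key hI0).2, hI0⟩
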